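/- Let n ≥ 2, 1 ≤ p ≤ n, and let g be an integer with 0 ≤ g ≤ (p−1)/2. Then C_{p,g}^{(n)} = Σ_{k=0}^{2g} (−1)^{p−k−1} Σ_{t=max(k−g,0)}^{⌊k/2⌋} binom(n−k+2t, t) · 2^{k−2t} · binom(n, k−2t). (This is the intermediate identity (3.10) established in the proof of Claim 3.8.) -/

import Mathlib

noncomputable section

open Finset PowerSeries

/-- Binomial coefficient `binom b a` with integer arguments,
zero when `a < 0` or `b < a`. -/
def ibinom (b a : ℤ) : ℤ := if a < 0 ∨ b < a then 0 else (b.toNat.choose a.toNat : ℤ)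

/-- One-norm `‖μ‖` of an integer vector. -/
def onenorm {n : ℕ} (μ : Fin n → ℤ) : ℕ := ∑ i, (μ i).natAbs

/-- `Z(μ)`: number of zero coordinates. -/
def zcount {n : ℕ} (μ : Fin n → ℤ) : ℕ := (univ.filter fun i => μ i = 0).card

/-- `N_𝓛(k, ℓ)`. -/
def Ncard {n : ℕ} (L : Set (Fin n → ℤ)) (k ℓ : ℕ) : ℕ :=
  {μ : Fin n → ℤ | μ ∈ L ∧ onenorm μ = k ∧ zcount μ = ℓ}.ncard

/-- `N_𝓛(k)`. -/
def NcardTot {n : ℕ} (L : Set (Fin n → ℤ)) (k : ℕ) : ℕ :=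
  {μ : Fin n → ℤ | μ ∈ L ∧ onenorm μ = k}.ncard

/-- `ϑ_𝓛^{(ℓ)}(z) = Σ_{k≥0} N_𝓛(k,ℓ) z^k`. -/
def thetaL {n : ℕ} (L : Set (Fin n → ℤ)) (ℓ : ℕ) : PowerSeries ℤ :=
  PowerSeries.mk fun k => (Ncard L k ℓ : ℤ)

/-- `ϑ_𝓛(z) = Σ_{k≥0} N_𝓛(k) z^k`. -/
def thetaTot {n : ℕ} (L : Set (Fin n → ℤ)) : PowerSeries ℤ :=
  PowerSeries.mk fun k => (NcardTot L k : ℤ)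

/-- `N_𝓛^red(k,ℓ)`, counting elements of `C(q) ∩ 𝓛`. -/
def NcardRed {n : ℕ} (L : Set (Fin n → ℤ)) (q k ℓ : ℕ) : ℕ :=
  {μ : Fin n → ℤ | (∀ i, |μ i| < (q : ℤ)) ∧ μ ∈ L ∧ onenorm μ = k ∧ zcount μ = ℓ}.ncard

/-- `Φ_𝓛^{(ℓ)}(z) = Σ_{k≥0} N_𝓛^red(k,ℓ) z^k`. -/
def PhiL {n : ℕ} (L : Set (Fin n → ℤ)) (q ℓ : ℕ) : PowerSeries ℤ :=
  PowerSeries.mk fun k => (NcardRed L q k ℓ : ℤ)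

/-- `𝓛` is `q`-periodic: `μ ∈ 𝓛 ↔ μ + qν ∈ 𝓛`. -/
def qPeriodic {n : ℕ} (q : ℕ) (L : Set (Fin n → ℤ)) : Prop :=
  ∀ μ ν : Fin n → ℤ, μ ∈ L ↔ (μ + (q : ℤ) • ν) ∈ L

/-- `M_𝓛(k,p)`. -/
def Mcoef {n : ℕ} (L : Set (Fin n → ℤ)) (k p : ℕ) : ℤ :=
  ∑ ℓ ∈ range (n+1), ∑ r ∈ range ((k-1+p)/2 + 1),
    (Ncard L (k-1+p-2*r) ℓ : ℤ) *
    ∑ j ∈ Icc 1 p, (-1 : ℤ)^(j-1) *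
      ∑ t ∈ range ((p-j)/2 + 1), ibinom ((n : ℤ) - p + j + 2*t) t *
        ∑ β ∈ range (p-j-2*t+1),
          2^(p-j-2*t-β) * ibinom ((n : ℤ) - ℓ) β * ibinom (ℓ : ℤ) ((p-j-2*t-β : ℕ)) *
          ∑ α ∈ range (β+1), ibinom (β : ℤ) α *
            ∑ i ∈ range j, ibinom ((r : ℤ) - i - p + j + α + t + n - 2) ((n : ℤ) - 2)

/-- `Ã_p^{(ℓ)}(z) = z^p A_p^{(ℓ)}(z)`. -/
def Atilde (n p ℓ : ℕ) : PowerSeries ℤ :=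
  ∑ j ∈ Icc 1 p, C ((-1 : ℤ)^(j-1)) *
    ∑ t ∈ range ((p-j)/2 + 1), C (ibinom ((n : ℤ) - p + j + 2*t) t) *
      ∑ β ∈ range (p-j-2*t+1),
        C (2^(p-j-2*t-β) * ibinom ((n : ℤ) - ℓ) β * ibinom (ℓ : ℤ) ((p-j-2*t-β : ℕ))) *
        ∑ α ∈ range (β+1), C (ibinom (β : ℤ) α) *
          ∑ i ∈ range j, (X : PowerSeries ℤ)^(2*p - 2*(j+t+α-i))

/-- `Υ_m^{(ℓ)}(z)`; zero when `m < 0`. -/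
def Upsilon {n : ℕ} (L : Set (Fin n → ℤ)) (m : ℤ) (ℓ : ℕ) : PowerSeries ℤ :=
  if m < 0 then 0 else
    ∑ h ∈ range (m.toNat + 1),
      C (∑ s ∈ range (h/2 + 1), (Ncard L (h - 2*s) ℓ : ℤ) * ((s + n - 2).choose (n-2) : ℤ)) *
        (X : PowerSeries ℤ)^h

/-- `B̃_{𝓛,p}^{(ℓ)}(z) = z^p B_{𝓛,p}^{(ℓ)}(z)`. -/
def Btilde {n : ℕ} (L : Set (Fin n → ℤ)) (p ℓ : ℕ) : PowerSeries ℤ :=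
  ∑ j ∈ Icc 1 p, C ((-1 : ℤ)^(j-1)) *
    ∑ t ∈ range ((p-j)/2 + 1), C (ibinom ((n : ℤ) - p + j + 2*t) t) *
      ∑ β ∈ range (p-j-2*t+1),
        C (2^(p-j-2*t-β) * ibinom ((n : ℤ) - ℓ) β * ibinom (ℓ : ℤ) ((p-j-2*t-β : ℕ))) *
        ∑ α ∈ range (β+1), C (ibinom (β : ℤ) α) *
          ∑ i ∈ range j,
            (X : PowerSeries ℤ)^(2*p - 2*(j+t+α-i)) *
              Upsilon L (2*((j : ℤ) + t + α - i) - p - 1) ℓ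

/-- `C_{p,g}^{(ℓ)}`. -/
def Cpg (n p g ℓ : ℕ) : ℤ :=
  ∑ j ∈ Icc 1 p, (-1 : ℤ)^(j-1) *
    ∑ t ∈ range ((p-j)/2 + 1), ibinom ((n : ℤ) - p + j + 2*t) t *
      ∑ β ∈ range (p-j-2*t+1),
        2^(p-j-2*t-β) * ibinom ((n : ℤ) - ℓ) β * ibinom (ℓ : ℤ) ((p-j-2*t-β : ℕ)) *
        ∑ i ∈ range j, ibinom (β : ℤ) ((p : ℤ) + i - j - t - g)

lemma ibinom_natCast (b a : ℕ) : ibinom (b : ℤ) (a : ℤ) = (b.choose a : ℤ) := by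
  unfold ibinom
  split_ifs with h
  · have hba : b < a := by omega
    simp [Nat.choose_eq_zero_of_lt hba]
  · simp

lemma ibinom_zero_left (b : ℤ) : ibinom 0 b = if b = 0 then 1 else 0 := by
  unfold ibinom
  rcases lt_trichotomy b 0 with h | h | h
  · rw [if_pos (Or.inl h), if_neg (by omega)]
  · subst h; simp
  · rw [if_pos (Or.inr h), if_neg (by omega)]

lemma isum (p g j t : ℕ) (htg : t + g + 1 ≤ p) :
    ∑ i ∈ range j, ibinom 0 ((p:ℤ) + i - j - t - g) =
      if p ≤ j + t + g then 1 else 0 := by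
  by_cases h : p ≤ j + t + g
  · rw [if_pos h]
    have hd : j + t + g - p < j := by omega
    calc ∑ i ∈ range j, ibinom 0 ((p:ℤ) + i - j - t - g)
        = ∑ i ∈ range j, if i = j + t + g - p then (1:ℤ) else 0 := by
          refine Finset.sum_congr rfl fun i hi => ?_
          rw [ibinom_zero_left]
          have he : ((p:ℤ) + i - j - t - g = 0) ↔ (i = j + t + g - p) := by omega
          simp only [he]
      _ = if j + t + g - p ∈ range j then (1:ℤ) else 0 :=
          Finset.sum_ite_eq' (range j) _ (fun _ => (1:ℤ))
      _ = 1 := by rw [if_pos (Finset.mem_range.mpr hd)]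
  · rw [if_neg h]
    refine Finset.sum_eq_zero fun i hi => ?_
    rw [ibinom_zero_left, if_neg (by omega)]

/-- auxiliary summand used in the proof of `stmt11` -/
def Fj (n p g j : ℕ) : ℤ :=
  (-1)^(j-1) * ∑ t ∈ range ((p-j)/2 + 1),
    ibinom ((n : ℤ) - p + j + 2*t) t *
      (2^(p-j-2*t) * ibinom (n : ℤ) ((p-j-2*t : ℕ) : ℤ) *
        (if p ≤ j + t + g then 1 else 0))

lemma step1 {n p g : ℕ} (hp1 : 1 ≤ p) (hg : 2*g + 1 ≤ p) :
    Cpg n p g n = ∑ j ∈ Icc 1 p, Fj n p g j := by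
  unfold Cpg Fj
  refine Finset.sum_congr rfl fun j hj => ?_
  have hj' := Finset.mem_Icc.mp hj
  congr 1
  refine Finset.sum_congr rfl fun t ht => ?_
  have ht' := Finset.mem_range.mp ht
  have htg : t + g + 1 ≤ p := by omega
  congr 1
  rw [Finset.sum_eq_single 0]
  · simp only [Nat.cast_zero, Nat.sub_zero, sub_self]
    rw [isum p g j t htg, ibinom_zero_left, if_pos rfl]
    ring
  · intro b _ hb0
    rw [sub_self, ibinom_zero_left, if_neg (by exact_mod_cast hb0)]
    ring
  · intro h
    exact absurd (Finset.mem_range.mpr (Nat.succ_pos _)) h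

lemma step2 {n p g : ℕ} (hp1 : 1 ≤ p) :
    ∑ j ∈ Icc 1 p, Fj n p g j = ∑ k ∈ range p, Fj n p g (p - k) := by
  refine Finset.sum_nbij' (fun j => p - j) (fun k => p - k) ?_ ?_ ?_ ?_ ?_
  · intro j hj; have := Finset.mem_Icc.mp hj
    exact Finset.mem_range.mpr (by omega)
  · intro k hk; have := Finset.mem_range.mp hk
    exact Finset.mem_Icc.mpr (by omega)
  · intro j hj; have := Finset.mem_Icc.mp hj; omega
  · intro k hk; have := Finset.mem_range.mp hk; omega
  · intro j hj; have := Finset.mem_Icc.mp hj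
    congr 1; omega

lemma step3 {n p g : ℕ} (hg : 2*g + 1 ≤ p) :
    ∑ k ∈ range p, Fj n p g (p - k) = ∑ k ∈ range (2*g+1), Fj n p g (p - k) := by
  refine (Finset.sum_subset (Finset.range_subset_range.mpr (by omega)) ?_).symm
  intro k hk hk'
  have h1 := Finset.mem_range.mp hk
  have h2 : 2*g + 1 ≤ k := by
    by_contra h
    exact hk' (Finset.mem_range.mpr (by omega))
  unfold Fj
  rw [Finset.sum_eq_zero, mul_zero]
  intro t ht
  have ht' := Finset.mem_range.mp ht
  rw [if_neg (by omega), mul_zero, mul_zero]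

lemma step4 {n p g k : ℕ} (hpn : p ≤ n) (hg : 2*g + 1 ≤ p) (hk : k ≤ 2*g) :
    Fj n p g (p - k) =
      (-1 : ℤ)^(p-k-1) *
        ∑ t ∈ Icc (k-g) (k/2),
          ((n-k+2*t).choose t : ℤ) * 2^(k-2*t) * (n.choose (k-2*t) : ℤ) := by
  have hkp : k < p := by omega
  unfold Fj
  have e1 : p - (p - k) = k := by omega
  rw [e1]
  congr 1
  rw [show Icc (k-g) (k/2) = (range (k/2+1)).filter (fun t => k ≤ t + g) by
        ext x; simp only [Finset.mem_Icc, Finset.mem_filter, Finset.mem_range]; omega,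
      Finset.sum_filter]
  refine Finset.sum_congr rfl fun t ht => ?_
  have ht' := Finset.mem_range.mp ht
  by_cases hc : k ≤ t + g
  · rw [if_pos hc, if_pos (show p ≤ (p - k) + t + g by omega)]
    have e2 : (n : ℤ) - p + (p - k : ℕ) + 2*t = ((n - k + 2*t : ℕ) : ℤ) := by omega
    rw [e2, ibinom_natCast, ibinom_natCast]
    ring
  · rw [if_neg hc, if_neg (show ¬ p ≤ (p - k) + t + g by omega)]
    ring

/-- identity (3.10):
`C_{p,g}^{(n)} = Σ_{k=0}^{2g} (-1)^{p-k-1} Σ_{t=max(k-g,0)}^{⌊k/2⌋}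
  binom(n-k+2t, t) 2^{k-2t} binom(n, k-2t)`. -/
theorem stmt11 {n p g : ℕ} (hn : 2 ≤ n) (hp1 : 1 ≤ p) (hpn : p ≤ n)
    (hg : 2*g + 1 ≤ p) :
    Cpg n p g n =
      ∑ k ∈ range (2*g+1), (-1 : ℤ)^(p-k-1) *
        ∑ t ∈ Icc (k-g) (k/2),
          ((n-k+2*t).choose t : ℤ) * 2^(k-2*t) * (n.choose (k-2*t) : ℤ) := by
  rw [step1 hp1 hg, step2 hp1, step3 hg]
  exact Finset.sum_congr rfl fun k hk =>
    step4 hpn hg (by have := Finset.mem_range.mp hk; omega)
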